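/- Let n ≥ 1, p ∈ (0,1), q := 1-p, and suppose n·q/p ≤ e^{r(α*)} - 1 where α* is the unique minimizer of r(α) = ln(1/2 - α)/(-α) on (0, 1/2). Let q_{n-1} := n p^{n-1} q + p^n and q_n := p^n be the binomial(n,p) upper-tail probabilities at n-1 and n. Then for all x ∈ [n, n + 1/2]: q_{n-1}^{n-x} q_n^{x-n+1} ≥ (n + 1/2 - x)·q_n. -/

import Mathlib

theorem stmt_18 (n : ℕ) (hn : 1 ≤ n) (p : ℝ) (hp : p ∈ Set.Ioo (0 : ℝ) 1)
    (q : ℝ) (hq : q = 1 - p)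
    (αstar : ℝ) (hαs : αstar ∈ Set.Ioo (0 : ℝ) (1 / 2))
    (hmin : ∀ α ∈ Set.Ioo (0 : ℝ) (1 / 2),
      Real.log (1 / 2 - αstar) / (-αstar) ≤ Real.log (1 / 2 - α) / (-α))
    (hbound : (n : ℝ) * q / p ≤ Real.exp (Real.log (1 / 2 - αstar) / (-αstar)) - 1) :
    ∀ x ∈ Set.Icc (n : ℝ) ((n : ℝ) + 1 / 2),
      ((n : ℝ) * p ^ (n - 1) * q + p ^ n) ^ ((n : ℝ) - x) * (p ^ n : ℝ) ^ (x - (n : ℝ) + 1)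
        ≥ ((n : ℝ) + 1 / 2 - x) * p ^ n := by
  obtain ⟨hp0, hp1⟩ := hp
  intro x hx
  obtain ⟨hx1, hx2⟩ := hx
  have hq0 : 0 < q := by rw [hq]; linarith
  have hpn : (0:ℝ) < p ^ n := pow_pos hp0 n
  set α : ℝ := x - n with hα
  have hα0 : 0 ≤ α := by simp only [hα]; linarith
  have hα2 : α ≤ 1/2 := by simp only [hα]; linarith
  set u : ℝ := (n:ℝ) * q / p + 1 with hu
  have hnpos : (0:ℝ) < n := by exact_mod_cast hn
  have hu1 : 1 < u := by
    have : 0 < (n:ℝ) * q / p := by positivity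
    simp only [hu]; linarith
  have hu0 : 0 < u := by linarith
  have hn' : n - 1 + 1 = n := Nat.succ_pred_eq_of_pos hn
  have hfact : (n : ℝ) * p ^ (n - 1) * q + p ^ n = p ^ n * u := by
    rw [hu, mul_add, mul_one, ← hn', pow_succ]
    field_simp
    rw [Nat.add_sub_cancel]
    ring
  have key : (1:ℝ)/2 - α ≤ u ^ (-α) := by
    rcases le_or_gt ((1:ℝ)/2 - α) 0 with h | h
    · exact h.trans (Real.rpow_pos_of_pos hu0 _).le
    rcases eq_or_lt_of_le hα0 with h0 | h0
    · rw [← h0]; norm_num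
    · have hαio : α ∈ Set.Ioo (0:ℝ) (1/2) := ⟨h0, by linarith⟩
      have hr := hmin α hαio
      have hlogu : Real.log u ≤ Real.log (1/2 - αstar) / (-αstar) := by
        have hue : u ≤ Real.exp (Real.log (1/2 - αstar) / (-αstar)) := by
          simp only [hu]; linarith
        calc Real.log u ≤ Real.log (Real.exp (Real.log (1/2 - αstar) / (-αstar))) :=
              Real.log_le_log hu0 hue
          _ = _ := Real.log_exp _
      have hlogu2 : Real.log u ≤ Real.log (1/2 - α) / (-α) := hlogu.trans hr
      have hmul : Real.log (1/2 - α) ≤ -α * Real.log u := by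
        have := mul_le_mul_of_nonpos_left hlogu2 (by linarith : -α ≤ 0)
        rwa [mul_div_cancel₀ _ (by linarith : -α ≠ 0)] at this
      have : Real.exp (Real.log (1/2 - α)) ≤ Real.exp (-α * Real.log u) :=
        Real.exp_le_exp.mpr hmul
      rw [Real.exp_log h, mul_comm] at this
      rwa [Real.rpow_def_of_pos hu0]
  have hsplit : ((n:ℝ) * p ^ (n - 1) * q + p ^ n) ^ ((n : ℝ) - x) * (p ^ n : ℝ) ^ (x - (n : ℝ) + 1)
      = p ^ n * u ^ (-α) := by
    rw [hfact, Real.mul_rpow hpn.le hu0.le]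
    have h1 : (p ^ n : ℝ) ^ ((n:ℝ) - x) * (p ^ n : ℝ) ^ (x - (n:ℝ) + 1) = p ^ n := by
      rw [← Real.rpow_add hpn]
      have : (n:ℝ) - x + (x - (n:ℝ) + 1) = 1 := by ring
      rw [this, Real.rpow_one]
    have h2 : ((n:ℝ) - x) = -α := by simp only [hα]; ring
    calc (p ^ n : ℝ) ^ ((n:ℝ) - x) * u ^ ((n:ℝ) - x) * (p ^ n : ℝ) ^ (x - (n:ℝ) + 1)
        = (p ^ n : ℝ) ^ ((n:ℝ) - x) * (p ^ n : ℝ) ^ (x - (n:ℝ) + 1) * u ^ ((n:ℝ) - x) := by ring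
      _ = p ^ n * u ^ (-α) := by rw [h1, h2]
  rw [hsplit, ge_iff_le]
  have heq : (n:ℝ) + 1/2 - x = 1/2 - α := by simp only [hα]; ring
  rw [heq]
  calc (1/2 - α) * p ^ n ≤ u ^ (-α) * p ^ n := by
        exact mul_le_mul_of_nonneg_right key hpn.le
    _ = p ^ n * u ^ (-α) := by ring
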